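/- Let E be a field and σ : E → E a ring automorphism with σ∘σ = id and σ ≠ id; let F = {x ∈ E : σ(x) = x} be its fixed field. Let n ≥ 1. Define an action of (E^×)ⁿ on the set (E^×)^{n−1} × F^×, with coordinates (k_1,…,k_{n−1},k_n), by (a·k)_i = a_i a_{i+1}^{-1} k_i for 1 ≤ i ≤ n−1 and (a·k)_n = a_n σ(a_n) k_n. Then two tuples k, k' lie in the same orbit if and only if k'_n k_n^{-1} ∈ {a σ(a) : a ∈ E^×}. In particular, the orbit space is in bijection with F^×/N_{E/F}(E^×), where N_{E/F}(a) = a σ(a) is the norm. -/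

import Mathlib

/-- The torus action on Whittaker data for the quasi-split unitary group
`U_{2n}(F)` (`E/F` quadratic with involution `σ`): the coefficients satisfy
`k_0, …, k_{n-2} ∈ E^×` and `k_{n-1} ∈ F^×` (σ-fixed), the torus acts by
`(a·k)_i = a_i a_{i+1}⁻¹ k_i` for `i < n-1` and `(a·k)_{n-1} = a_{n-1} σ(a_{n-1}) k_{n-1}`.
Two tuples lie in the same orbit iff the ratio of their last coordinates is a
norm `c·σ(c)`; so orbits are parameterized by `F^×/N_{E/F}(E^×)`. -/
theorem stmt_11 (E : Type*) [Field E] (σ : E →+* E)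
    (hσ2 : ∀ x, σ (σ x) = x) (hσ1 : σ ≠ RingHom.id E)
    (n : ℕ) (hn : 0 < n)
    (k k' : Fin n → E)
    (hk0 : ∀ i, k i ≠ 0) (hk'0 : ∀ i, k' i ≠ 0)
    (hkF : σ (k ⟨n - 1, by omega⟩) = k ⟨n - 1, by omega⟩)
    (hk'F : σ (k' ⟨n - 1, by omega⟩) = k' ⟨n - 1, by omega⟩) :
    (∃ a : Fin n → E, (∀ i, a i ≠ 0) ∧
      (∀ i : Fin n, k' i =
        if h : (i : ℕ) + 1 < n then a i * (a ⟨(i : ℕ) + 1, h⟩)⁻¹ * k i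
        else a i * σ (a i) * k i)) ↔
    (∃ c : E, c ≠ 0 ∧
      k' ⟨n - 1, by omega⟩ * (k ⟨n - 1, by omega⟩)⁻¹ = c * σ c) := by
  constructor
  · rintro ⟨a, ha0, ha⟩
    refine ⟨a ⟨n - 1, by omega⟩, ha0 _, ?_⟩
    have h := ha ⟨n - 1, by omega⟩
    rw [dif_neg (by simp; omega)] at h
    rw [h, mul_inv_cancel_right₀ (hk0 _)]
  · rintro ⟨c, hc0, hc⟩
    set r : ℕ → E := fun j => if h : j < n then k' ⟨j, h⟩ / k ⟨j, h⟩ else 1 with hr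
    have hrne : ∀ j, r j ≠ 0 := by
      intro j
      simp only [hr]
      split
      · exact div_ne_zero (hk'0 _) (hk0 _)
      · exact one_ne_zero
    refine ⟨fun i => c * ∏ j ∈ Finset.Ico (i : ℕ) (n - 1), r j, ?_, ?_⟩
    · intro i
      exact mul_ne_zero hc0 (Finset.prod_ne_zero_iff.2 fun j _ => hrne j)
    · intro i
      by_cases h : (i : ℕ) + 1 < n
      · rw [dif_pos h]
        have hlt : (i : ℕ) < n - 1 := by omega
        dsimp only
        rw [Finset.prod_eq_prod_Ico_succ_bot hlt]
        set P := ∏ j ∈ Finset.Ico ((i : ℕ) + 1) (n - 1), r j with hPdef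
        have hP : P ≠ 0 := Finset.prod_ne_zero_iff.2 fun j _ => hrne j
        have hri : r (i : ℕ) = k' i / k i := by
          simp only [hr, dif_pos i.isLt, Fin.eta]
        rw [hri]
        field_simp
        rw [eq_div_iff (hk0 i)]
      · rw [dif_neg h]
        have hi : i = ⟨n - 1, by omega⟩ := by
          apply Fin.ext; simp; omega
        rw [hi]
        dsimp only
        simp only [Finset.Ico_self, Finset.prod_empty, mul_one]
        have hk := hk0 ⟨n - 1, by omega⟩
        field_simp at hc
        rw [hc]; ring
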